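/- Promonoidal associator of spliced arrows (Lemma: promonoidal splice associator). Let C be a category and A, B, X, Y, X', Y', X'', Y'' objects of C. Let Q₁ be the quotient of the type of tuples (U V : C, f₀ : A ⟶ X, f₁ : Y ⟶ U, f₂ : V ⟶ B, g₀ : U ⟶ X', g₁ : Y' ⟶ X'', g₂ : Y'' ⟶ V) by the equivalence relation generated by: for all u : U ⟶ U', v : V' ⟶ V, g₀' : U' ⟶ X' and g₂' : Y'' ⟶ V', the tuple (U', V', f₀, f₁ ≫ u, v ≫ f₂, g₀', g₁, g₂') is identified with (U, V, f₀, f₁, f₂, u ≫ g₀', g₁, g₂' ≫ v). Let Q₂ be the quotient of the type of tuples (U V : C, h₀ : A ⟶ U, h₁ : V ⟶ X'', h₂ : Y'' ⟶ B, k₀ : U ⟶ X, k₁ : Y ⟶ X', k₂ : Y' ⟶ V) by the analogous dinaturality relation in (U,V). Then the maps sending the class of (f₀, f₁, f₂, g₀, g₁, g₂) to (f₀, f₁ ≫ g₀, g₁, g₂ ≫ f₂) and the class of (h₀, h₁, h₂, k₀, k₁, k₂) to (h₀ ≫ k₀, k₁, k₂ ≫ h₁, h₂) are well-defined bijections from Q₁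 and Q₂, respectively, to Hom(A,X) × Hom(Y,X') × Hom(Y',X'') × Hom(Y'',B); in particular Q₁ ≅ Q₂. -/
import Mathlib


/-!
Promonoidal associator of spliced arrows.
-/

open CategoryTheory

universe v u

variable {C : Type u} [Category.{v} C]

/-- A representative of a split of spliced arrows filled on its second hole:
an outer two-hole splice `(f₀, f₁, f₂)` with middle objects `(U,V)` for its
second hole, and an inner two-hole splice `(g₀, g₁, g₂)` from `(U,V)`. -/
structure SpliceRep₁ (A B X Y X' Y' X'' Y'' : C) where
  U : C
  V : C
  f₀ : A ⟶ X
  f₁ : Y ⟶ U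
  f₂ : V ⟶ B
  g₀ : U ⟶ X'
  g₁ : Y' ⟶ X''
  g₂ : Y'' ⟶ V

/-- Dinaturality in `(U,V)` for `SpliceRep₁`. -/
inductive SpliceRel₁ (A B X Y X' Y' X'' Y'' : C) :
    SpliceRep₁ A B X Y X' Y' X'' Y'' → SpliceRep₁ A B X Y X' Y' X'' Y'' → Prop
  | dinat {U U' V V' : C} (u : U ⟶ U') (v : V' ⟶ V)
      (f₀ : A ⟶ X) (f₁ : Y ⟶ U) (f₂ : V ⟶ B)
      (g₀' : U' ⟶ X') (g₁ : Y' ⟶ X'') (g₂' : Y'' ⟶ V') :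
      SpliceRel₁ A B X Y X' Y' X'' Y''
        ⟨U', V', f₀, f₁ ≫ u, v ≫ f₂, g₀', g₁, g₂'⟩
        ⟨U, V, f₀, f₁, f₂, u ≫ g₀', g₁, g₂' ≫ v⟩

/-- A representative of a split of spliced arrows filled on its first hole:
an outer two-hole splice `(h₀, h₁, h₂)` with middle objects `(U,V)` for its
first hole, and an inner two-hole splice `(k₀, k₁, k₂)` from `(U,V)`. -/
structure SpliceRep₂ (A B X Y X' Y' X'' Y'' : C) where
  U : C
  V : C
  h₀ : A ⟶ U
  h₁ : V ⟶ X''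
  h₂ : Y'' ⟶ B
  k₀ : U ⟶ X
  k₁ : Y ⟶ X'
  k₂ : Y' ⟶ V

/-- Dinaturality in `(U,V)` for `SpliceRep₂`. -/
inductive SpliceRel₂ (A B X Y X' Y' X'' Y'' : C) :
    SpliceRep₂ A B X Y X' Y' X'' Y'' → SpliceRep₂ A B X Y X' Y' X'' Y'' → Prop
  | dinat {U U' V V' : C} (u : U ⟶ U') (v : V' ⟶ V)
      (h₀ : A ⟶ U) (h₁ : V ⟶ X'') (h₂ : Y'' ⟶ B)
      (k₀' : U' ⟶ X) (k₁ : Y ⟶ X') (k₂' : Y' ⟶ V') :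
      SpliceRel₂ A B X Y X' Y' X'' Y''
        ⟨U', V', h₀ ≫ u, v ≫ h₁, h₂, k₀', k₁, k₂'⟩
        ⟨U, V, h₀, h₁, h₂, u ≫ k₀', k₁, k₂' ≫ v⟩

/-- The two ways of splitting a spliced arrow with three holes agree: both
quotients are in bijection with the set of quadruples of arrows, by the maps
reading off the contour, and in particular they are isomorphic to each other. -/
theorem splice_promonoidal_associator (C : Type u) [Category.{v} C]
    (A B X Y X' Y' X'' Y'' : C) :
    ∃ (e₁ : Quot (SpliceRel₁ A B X Y X' Y' X'' Y'') →
        (A ⟶ X) × (Y ⟶ X') × (Y' ⟶ X'') × (Y'' ⟶ B))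
      (e₂ : Quot (SpliceRel₂ A B X Y X' Y' X'' Y'') →
        (A ⟶ X) × (Y ⟶ X') × (Y' ⟶ X'') × (Y'' ⟶ B)),
      (∀ r : SpliceRep₁ A B X Y X' Y' X'' Y'',
          e₁ (Quot.mk _ r) = (r.f₀, r.f₁ ≫ r.g₀, r.g₁, r.g₂ ≫ r.f₂)) ∧
      Function.Bijective e₁ ∧
      (∀ r : SpliceRep₂ A B X Y X' Y' X'' Y'',
          e₂ (Quot.mk _ r) = (r.h₀ ≫ r.k₀, r.k₁, r.k₂ ≫ r.h₁, r.h₂)) ∧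
      Function.Bijective e₂ ∧
      Nonempty (Quot (SpliceRel₁ A B X Y X' Y' X'' Y'') ≃
        Quot (SpliceRel₂ A B X Y X' Y' X'' Y'')) := by
  classical
  set e₁ : Quot (SpliceRel₁ A B X Y X' Y' X'' Y'') →
      (A ⟶ X) × (Y ⟶ X') × (Y' ⟶ X'') × (Y'' ⟶ B) :=
    Quot.lift (fun r => (r.f₀, r.f₁ ≫ r.g₀, r.g₁, r.g₂ ≫ r.f₂))
      (by rintro _ _ ⟨u, v, f₀, f₁, f₂, g₀', g₁, g₂'⟩; simp) with he₁
  set e₂ : Quot (SpliceRel₂ A B X Y X' Y' X'' Y'') →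
      (A ⟶ X) × (Y ⟶ X') × (Y' ⟶ X'') × (Y'' ⟶ B) :=
    Quot.lift (fun r => (r.h₀ ≫ r.k₀, r.k₁, r.k₂ ≫ r.h₁, r.h₂))
      (by rintro _ _ ⟨u, v, h₀, h₁, h₂, k₀', k₁, k₂'⟩; simp) with he₂
  have hb₁ : Function.Bijective e₁ := by
    constructor
    · intro x y
      induction x using Quot.ind with | _ r =>
      induction y using Quot.ind with | _ s =>
      intro h
      simp only [he₁, Prod.mk.injEq] at h
      obtain ⟨h1, h2, h3, h4⟩ := h
      have c1 : Quot.mk _ r = Quot.mk (SpliceRel₁ A B X Y X' Y' X'' Y'')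
          ⟨X', Y'', r.f₀, r.f₁ ≫ r.g₀, r.g₂ ≫ r.f₂, 𝟙 _, r.g₁, 𝟙 _⟩ := by
        refine (Quot.sound ?_).symm
        simpa using SpliceRel₁.dinat (A := A) (B := B) r.g₀ r.g₂ r.f₀ r.f₁ r.f₂ (𝟙 _) r.g₁ (𝟙 _)
      have c2 : Quot.mk _ s = Quot.mk (SpliceRel₁ A B X Y X' Y' X'' Y'')
          ⟨X', Y'', s.f₀, s.f₁ ≫ s.g₀, s.g₂ ≫ s.f₂, 𝟙 _, s.g₁, 𝟙 _⟩ := by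
        refine (Quot.sound ?_).symm
        simpa using SpliceRel₁.dinat (A := A) (B := B) s.g₀ s.g₂ s.f₀ s.f₁ s.f₂ (𝟙 _) s.g₁ (𝟙 _)
      rw [c1, c2, h1, h2, h3, h4]
    · rintro ⟨a, b, c, d⟩
      exact ⟨Quot.mk _ ⟨X', Y'', a, b, d, 𝟙 _, c, 𝟙 _⟩, by simp [he₁]⟩
  have hb₂ : Function.Bijective e₂ := by
    constructor
    · intro x y
      induction x using Quot.ind with | _ r =>
      induction y using Quot.ind with | _ s =>
      intro h
      simp only [he₂, Prod.mk.injEq] at h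
      obtain ⟨h1, h2, h3, h4⟩ := h
      have c1 : Quot.mk _ r = Quot.mk (SpliceRel₂ A B X Y X' Y' X'' Y'')
          ⟨X, Y', r.h₀ ≫ r.k₀, r.k₂ ≫ r.h₁, r.h₂, 𝟙 _, r.k₁, 𝟙 _⟩ := by
        refine (Quot.sound ?_).symm
        simpa using SpliceRel₂.dinat (A := A) (B := B) r.k₀ r.k₂ r.h₀ r.h₁ r.h₂ (𝟙 _) r.k₁ (𝟙 _)
      have c2 : Quot.mk _ s = Quot.mk (SpliceRel₂ A B X Y X' Y' X'' Y'')
          ⟨X, Y', s.h₀ ≫ s.k₀, s.k₂ ≫ s.h₁, s.h₂, 𝟙 _, s.k₁, 𝟙 _⟩ := by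
        refine (Quot.sound ?_).symm
        simpa using SpliceRel₂.dinat (A := A) (B := B) s.k₀ s.k₂ s.h₀ s.h₁ s.h₂ (𝟙 _) s.k₁ (𝟙 _)
      rw [c1, c2, h1, h2, h3, h4]
    · rintro ⟨a, b, c, d⟩
      exact ⟨Quot.mk _ ⟨X, Y', a, c, d, 𝟙 _, b, 𝟙 _⟩, by simp [he₂]⟩
  exact ⟨e₁, e₂, fun r => rfl, hb₁, fun r => rfl, hb₂,
    ⟨(Equiv.ofBijective e₁ hb₁).trans (Equiv.ofBijective e₂ hb₂).symm⟩⟩
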